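/- Let X be a finite ground set and f a normalized monotone set function on X, and let d ≥ 0 be an integer. Then f is d-scopic submodular if and only if every supermodular set w.r.t. f has cardinality at most d (i.e., the supermodular width of f is at most d). -/

import Mathlib

variable {α : Type*} [Fintype α] [DecidableEq α]

/-- The margin of `S` given `T`: `f(S|T) = f(S ∪ T) - f(T)`. -/
def margin (f : Finset α → ℝ) (S T : Finset α) : ℝ := f (S ∪ T) - f T

/-- A nonempty set `T` is supermodular w.r.t. `f` if there exist `S` and `v ∉ T` such that
`f({v}|S ∪ T) > f({v}|S ∪ T')` for every proper subset `T' ⊊ T`. -/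
def SupermodularSet (f : Finset α → ℝ) (T : Finset α) : Prop :=
  T.Nonempty ∧ ∃ (S : Finset α) (v : α), v ∉ T ∧
    ∀ T' : Finset α, T' ⊂ T → margin f {v} (S ∪ T') < margin f {v} (S ∪ T)

/-- `f` is `d`-scopic submodular: for all `S ⊆ T` and `v ∉ T`,
`f({v}|T) ≤ max_{T' ⊆ T, |T'| ≤ d} f({v}|S ∪ T')`. -/
def ScopicSubmodular (d : ℕ) (f : Finset α → ℝ) : Prop :=
  ∀ S T : Finset α, S ⊆ T → ∀ v, v ∉ T →
    ∃ T' : Finset α, T' ⊆ T ∧ T'.card ≤ d ∧ margin f {v} T ≤ margin f {v} (S ∪ T')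

/-- a normalized monotone set function is `d`-scopic submodular iff every
supermodular set w.r.t. `f` has cardinality at most `d`. -/
theorem scopic_submodular_iff_supermodular_width_le (f : Finset α → ℝ)
    (hnorm : f ∅ = 0) (hmono : ∀ S T : Finset α, S ⊆ T → f S ≤ f T) (d : ℕ) :
    ScopicSubmodular d f ↔ ∀ T : Finset α, SupermodularSet f T → T.card ≤ d := by
  constructor
  · intro hsc T hT
    obtain ⟨hne, S, v, hvT, hstrict⟩ := hT
    by_cases hvS : v ∈ S
    · exfalso
      have h := hstrict ∅ (Finset.empty_ssubset.mpr hne)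
      have h1 : {v} ∪ (S ∪ (∅ : Finset α)) = S ∪ ∅ := by
        ext x; simp; intro hx; subst hx; exact hvS
      have h2 : {v} ∪ (S ∪ T) = S ∪ T := by
        ext x; simp; intro hx; subst hx; exact Or.inl hvS
      simp [margin, h1, h2] at h
      have h3 : ({v} : Finset α) ∪ S = S := Finset.union_eq_right.mpr (by simpa using hvS)
      rw [Finset.insert_eq, h3] at h
      exact lt_irrefl _ h
    · have hvST : v ∉ S ∪ T := by simp [hvS, hvT]
      obtain ⟨T', hT'sub, hT'card, hle⟩ := hsc S (S ∪ T) Finset.subset_union_left v hvST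
      have hunion : S ∪ (T' ∩ T) = S ∪ T' := by
        ext x
        simp only [Finset.mem_union, Finset.mem_inter]
        constructor
        · tauto
        · rintro (hx | hx)
          · exact Or.inl hx
          · rcases Finset.mem_union.mp (hT'sub hx) with h | h
            · exact Or.inl h
            · exact Or.inr ⟨hx, h⟩
      by_cases heq : T' ∩ T = T
      · calc T.card = (T' ∩ T).card := by rw [heq]
          _ ≤ T'.card := Finset.card_le_card Finset.inter_subset_left
          _ ≤ d := hT'card
      · exfalso
        have hss : T' ∩ T ⊂ T := ⟨Finset.inter_subset_right, fun h => heq (Finset.Subset.antisymm Finset.inter_subset_right h)⟩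
        have := hstrict (T' ∩ T) hss
        rw [hunion] at this
        linarith
  · intro hw S T hST v hvT
    obtain ⟨T₀, hT₀mem, hmax⟩ := Finset.exists_max_image T.powerset
      (fun T' => margin f {v} (S ∪ T')) ⟨∅, by simp⟩
    set Q := T.powerset.filter
      (fun T' => ∀ T'' ∈ T.powerset, margin f {v} (S ∪ T'') ≤ margin f {v} (S ∪ T')) with hQ
    have hQne : Q.Nonempty := ⟨T₀, Finset.mem_filter.mpr ⟨hT₀mem, hmax⟩⟩
    obtain ⟨T₁, hT₁Q, hmin⟩ := Finset.exists_min_image Q Finset.card hQne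
    obtain ⟨hT₁mem, hT₁max⟩ := Finset.mem_filter.mp hT₁Q
    have hT₁sub : T₁ ⊆ T := Finset.mem_powerset.mp hT₁mem
    have hcard : T₁.card ≤ d := by
      rcases T₁.eq_empty_or_nonempty with h | h
      · simp [h]
      · refine hw T₁ ⟨h, S, v, fun hv => hvT (hT₁sub hv), ?_⟩
        intro T'' hss
        have hsub'' : T'' ⊆ T := hss.subset.trans hT₁sub
        have hle : margin f {v} (S ∪ T'') ≤ margin f {v} (S ∪ T₁) :=
          hT₁max T'' (Finset.mem_powerset.mpr hsub'')
        refine lt_of_le_of_ne hle (fun heq => ?_)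
        have : T'' ∈ Q := Finset.mem_filter.mpr ⟨Finset.mem_powerset.mpr hsub'',
          fun a ha => heq ▸ hT₁max a ha⟩
        have := hmin T'' this
        have := Finset.card_lt_card hss
        omega
    refine ⟨T₁, hT₁sub, hcard, ?_⟩
    have : S ∪ T = T := Finset.union_eq_right.mpr hST
    calc margin f {v} T = margin f {v} (S ∪ T) := by rw [this]
      _ ≤ margin f {v} (S ∪ T₁) := hT₁max T (Finset.mem_powerset.mpr Finset.Subset.rfl)
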